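/- Fix integers 1 ≤ k ≤ n and assignments t, x ∈ {0,1}^n, let d be the number of positions j with x_j = t_j, and let S_t be the set of all k-clauses satisfied by t. If a clause is drawn uniformly at random from S_t, then the probability μ_{k,x} that it is satisfied by x equals (2^k − 2)/(2^k − 1) + C(d,k)/((2^k − 1)·C(n,k)); in particular μ_{k,x} ≤ 1 and (2^k − 1)·μ_{k,x} − (2^k − 2) = C(d,k)/C(n,k). -/

import Mathlib

open Finset

/-- A `k`-clause over `n` Boolean variables, encoded as a partial assignment
`c : Fin n → Option (Fin 2)` whose support (the clause's variable set `S`) has size `k`;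
`c j = some a` means `j ∈ S` with `ε(j) = a`. -/
def KClause (n k : ℕ) : Type :=
  {c : Fin n → Option (Fin 2) // (Finset.univ.filter (fun j => (c j).isSome)).card = k}

instance (n k : ℕ) : Fintype (KClause n k) := by
  unfold KClause; infer_instance

instance (n k : ℕ) : DecidableEq (KClause n k) := by
  unfold KClause; infer_instance

/-- The clause `c` is satisfied by the assignment `x` iff some literal of `c` is not
violated by `x`, i.e. `∃ j ∈ S` with `x j ≠ ε(j)`. -/
def ClauseSat {n k : ℕ} (x : Fin n → Fin 2) (c : KClause n k) : Prop :=
  ∃ j a, c.1 j = some a ∧ x j ≠ a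

instance {n k : ℕ} (x : Fin n → Fin 2) : DecidablePred (ClauseSat (k := k) x) := by
  intro c; unfold ClauseSat; infer_instance

/-- Number of positions where `x` agrees with `t`. -/
def agree {n : ℕ} (x t : Fin n → Fin 2) : ℕ :=
  (Finset.univ.filter (fun j => x j = t j)).card

lemma notSat_iff {n k : ℕ} (t : Fin n → Fin 2) (c : KClause n k) :
    ¬ ClauseSat t c ↔ ∀ j a, c.1 j = some a → t j = a := by
  unfold ClauseSat; push_neg; rfl

lemma card_unsat_subset {n k : ℕ} (t : Fin n → Fin 2) (A : Finset (Fin n)) :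
    ((univ : Finset (KClause n k)).filter
      (fun c => (¬ ClauseSat t c) ∧ (univ.filter (fun j => (c.1 j).isSome)) ⊆ A)).card
    = (A.card).choose k := by
  rw [← Finset.card_powersetCard]
  refine Finset.card_bij'
    (fun c _ => univ.filter (fun j => (c.1 j).isSome))
    (fun S hS => ⟨fun j => if j ∈ S then some (t j) else none, by
      rw [Finset.mem_powersetCard] at hS
      rw [← hS.2]; congr 1; ext j; simp⟩) ?_ ?_ ?_ ?_
  · intro c hc
    simp only [Finset.mem_filter, Finset.mem_univ, true_and] at hc
    rw [Finset.mem_powersetCard]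
    exact ⟨hc.2, c.2⟩
  · intro S hS
    rw [Finset.mem_powersetCard] at hS
    refine Finset.mem_filter.mpr ⟨Finset.mem_univ _, ?_⟩
    constructor
    · refine (notSat_iff _ _).mpr ?_
      intro j a h
      simp only at h
      split_ifs at h with hj
      · exact Option.some_inj.mp h
    · intro j hj
      simp only [Finset.mem_filter, Finset.mem_univ, true_and] at hj
      split_ifs at hj with h
      · exact hS.1 h
      · simp at hj
  · intro c hc
    simp only [Finset.mem_filter, Finset.mem_univ, true_and] at hc
    apply Subtype.ext
    funext j
    simp only [Finset.mem_filter, Finset.mem_univ, true_and]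
    split_ifs with h
    · obtain ⟨a, ha⟩ := Option.isSome_iff_exists.mp h
      rw [ha, (notSat_iff t c).mp hc.1 j a ha]
    · exact (Option.not_isSome_iff_eq_none.mp h).symm
  · intro S hS
    ext j
    simp only [Finset.mem_filter, Finset.mem_univ, true_and]
    by_cases h : j ∈ S <;> simp [h]

lemma card_univ_kclause (n k : ℕ) :
    ((univ : Finset (KClause n k)).card) = n.choose k * 2 ^ k := by
  rw [Finset.card_eq_sum_card_fiberwise
    (f := fun c : KClause n k => univ.filter (fun j => (c.1 j).isSome))
    (t := Finset.powersetCard k univ) (by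
      intro c _
      refine Finset.mem_coe.mpr (Finset.mem_powersetCard.mpr ?_)
      exact ⟨Finset.subset_univ _, c.2⟩)]
  rw [show (n.choose k * 2 ^ k) = (Finset.powersetCard k (univ : Finset (Fin n))).card * 2 ^ k by
    rw [Finset.card_powersetCard, Finset.card_univ, Fintype.card_fin]]
  have hfib : ∀ S ∈ Finset.powersetCard k (univ : Finset (Fin n)),
      ((univ : Finset (KClause n k)).filter
        (fun c => univ.filter (fun j => (c.1 j).isSome) = S)).card = 2 ^ k := by
    intro S hS
    rw [Finset.mem_powersetCard] at hS
    have : ((univ : Finset (↥S → Fin 2))).card = 2 ^ k := by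
      simp [Fintype.card_fun, hS.2]
    rw [← this]
    refine Finset.card_bij'
      (fun c hc => fun j => (c.1 j.1).get (by
        simp only [Finset.mem_filter, Finset.mem_univ, true_and] at hc
        have : (j : Fin n) ∈ univ.filter (fun j => (c.1 j).isSome) := hc ▸ j.2
        simpa using this))
      (fun f _ => ⟨fun j => if h : j ∈ S then some (f ⟨j, h⟩) else none, by
        rw [← hS.2]; congr 1; ext j; simp⟩) ?_ ?_ ?_ ?_
    · intro c hc; exact Finset.mem_univ _
    · intro f _
      refine Finset.mem_filter.mpr ⟨Finset.mem_univ _, ?_⟩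
      ext j
      simp only [Finset.mem_filter, Finset.mem_univ, true_and]
      by_cases h : j ∈ S <;> simp [h]
    · intro c hc
      simp only [Finset.mem_filter, Finset.mem_univ, true_and] at hc
      apply Subtype.ext
      funext j
      simp only
      split_ifs with h
      · exact Option.some_get _
      · have h3 : ¬(c.1 j).isSome := by
          have : j ∉ univ.filter (fun j => (c.1 j).isSome) := hc ▸ h
          simpa using this
        exact (Option.not_isSome_iff_eq_none.mp h3).symm
    · intro f _
      funext j
      simp [j.2]
  rw [Finset.sum_congr rfl hfib, Finset.sum_const, smul_eq_mul]

/-- Drawing a clause uniformly from `S_t` (the set of `k`-clauses satisfied by `t`), the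
probability `μ_{k,x}` that it is also satisfied by `x` equals
`(2^k − 2)/(2^k − 1) + C(d,k)/((2^k − 1)·C(n,k))`; in particular `μ_{k,x} ≤ 1` and
`(2^k − 1)·μ_{k,x} − (2^k − 2) = C(d,k)/C(n,k)`. -/
theorem uniform_clause_sat_probability (n k : ℕ) (hk : 1 ≤ k) (hkn : k ≤ n)
    (t x : Fin n → Fin 2) :
    let St : Finset (KClause n k) := Finset.univ.filter (fun c => ClauseSat t c)
    let μ : ℝ := ((St.filter (fun c => ClauseSat x c)).card : ℝ) / (St.card : ℝ)
    let d : ℕ := agree x t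
    μ = ((2 : ℝ) ^ k - 2) / ((2 : ℝ) ^ k - 1)
        + (d.choose k : ℝ) / (((2 : ℝ) ^ k - 1) * (n.choose k : ℝ)) ∧
    μ ≤ 1 ∧
    ((2 : ℝ) ^ k - 1) * μ - ((2 : ℝ) ^ k - 2) = (d.choose k : ℝ) / (n.choose k : ℝ) := by
  intro St μ d
  -- count of clauses unsatisfied by t
  have hT : ((univ : Finset (KClause n k)).filter (fun c => ¬ ClauseSat t c)).card
      = n.choose k := by
    have := card_unsat_subset (n := n) (k := k) t univ
    simp only [Finset.subset_univ, and_true, Finset.card_univ, Fintype.card_fin] at this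
    exact this
  have hX : ((univ : Finset (KClause n k)).filter (fun c => ¬ ClauseSat x c)).card
      = n.choose k := by
    have := card_unsat_subset (n := n) (k := k) x univ
    simp only [Finset.subset_univ, and_true, Finset.card_univ, Fintype.card_fin] at this
    exact this
  -- count of clauses unsatisfied by both
  have hTX : ((univ : Finset (KClause n k)).filter
      (fun c => ¬ ClauseSat t c ∧ ¬ ClauseSat x c)).card = d.choose k := by
    have key : ((univ : Finset (KClause n k)).filter
        (fun c => ¬ ClauseSat t c ∧
          (univ.filter (fun j => (c.1 j).isSome)) ⊆ (univ.filter (fun j => x j = t j)))).card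
        = d.choose k :=
      card_unsat_subset (n := n) (k := k) t (univ.filter (fun j => x j = t j))
    rw [← key]
    congr 1
    apply Finset.filter_congr
    intro c _
    constructor
    · rintro ⟨ht, hx⟩
      refine ⟨ht, fun j hj => ?_⟩
      simp only [Finset.mem_filter, Finset.mem_univ, true_and] at hj ⊢
      obtain ⟨a, ha⟩ := Option.isSome_iff_exists.mp hj
      rw [(notSat_iff t c).mp ht j a ha, (notSat_iff x c).mp hx j a ha]
    · rintro ⟨ht, hsub⟩
      refine ⟨ht, (notSat_iff x c).mpr fun j a ha => ?_⟩
      have hj : j ∈ univ.filter (fun j => (c.1 j).isSome) := by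
        simp only [Finset.mem_filter, Finset.mem_univ, true_and, Option.isSome_iff_exists]
        exact ⟨a, ha⟩
      have hxt := hsub hj
      simp only [Finset.mem_filter, Finset.mem_univ, true_and] at hxt
      rw [hxt, (notSat_iff t c).mp ht j a ha]
  -- total count
  have hU := card_univ_kclause n k
  -- |St| + N = N * 2^k
  have hSt : St.card + n.choose k = n.choose k * 2 ^ k := by
    rw [← hU, ← hT]
    exact Finset.card_filter_add_card_filter_not _
  -- inclusion-exclusion for B = sat t ∧ sat x
  have hBSt : St.filter (fun c => ClauseSat x c)
      = (univ : Finset (KClause n k)).filter (fun c => ClauseSat t c ∧ ClauseSat x c) := by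
    simp [St, Finset.filter_filter]
  have hB : ((univ : Finset (KClause n k)).filter
      (fun c => ClauseSat t c ∧ ClauseSat x c)).card + n.choose k + n.choose k
      = n.choose k * 2 ^ k + d.choose k := by
    have h1 : ((univ : Finset (KClause n k)).filter
        (fun c => ClauseSat t c ∧ ClauseSat x c)).card +
        ((univ : Finset (KClause n k)).filter
        (fun c => ¬ (ClauseSat t c ∧ ClauseSat x c))).card = n.choose k * 2 ^ k := by
      rw [← hU]; exact Finset.card_filter_add_card_filter_not _
    have h2 : (univ : Finset (KClause n k)).filter
        (fun c => ¬ (ClauseSat t c ∧ ClauseSat x c)) =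
        ((univ : Finset (KClause n k)).filter (fun c => ¬ ClauseSat t c)) ∪
        ((univ : Finset (KClause n k)).filter (fun c => ¬ ClauseSat x c)) := by
      rw [← Finset.filter_or]
      apply Finset.filter_congr
      intro c _
      tauto
    have h3 : ((univ : Finset (KClause n k)).filter (fun c => ¬ ClauseSat t c)) ∩
        ((univ : Finset (KClause n k)).filter (fun c => ¬ ClauseSat x c)) =
        (univ : Finset (KClause n k)).filter
          (fun c => ¬ ClauseSat t c ∧ ¬ ClauseSat x c) := by
      rw [Finset.filter_and]
    have h4 := Finset.card_union_add_card_inter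
      ((univ : Finset (KClause n k)).filter (fun c => ¬ ClauseSat t c))
      ((univ : Finset (KClause n k)).filter (fun c => ¬ ClauseSat x c))
    rw [h3, hTX, hT, hX] at h4
    rw [h2] at h1
    omega
  -- now real arithmetic
  have hNpos : (0 : ℝ) < (n.choose k : ℝ) := by
    exact_mod_cast Nat.choose_pos hkn
  have hDN : (d.choose k : ℝ) ≤ (n.choose k : ℝ) := by
    have hdn : d ≤ n := by
      have h5 := Finset.card_filter_le (univ : Finset (Fin n)) (fun j => x j = t j)
      simpa [d, agree] using h5
    exact_mod_cast Nat.choose_le_choose k hdn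
  have hDnn : (0 : ℝ) ≤ (d.choose k : ℝ) := by positivity
  have h2k : (2 : ℝ) ≤ 2 ^ k := by
    calc (2 : ℝ) = 2 ^ 1 := by norm_num
    _ ≤ 2 ^ k := by exact pow_le_pow_right₀ (by norm_num) hk
  have hStR : (St.card : ℝ) = (n.choose k : ℝ) * (2 ^ k - 1) := by
    have h6 : ((St.card : ℕ) : ℝ) + (n.choose k : ℝ)
        = (n.choose k : ℝ) * 2 ^ k := by exact_mod_cast hSt
    linarith
  have hBR : ((St.filter (fun c => ClauseSat x c)).card : ℝ)
      = (n.choose k : ℝ) * (2 ^ k - 2) + (d.choose k : ℝ) := by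
    rw [hBSt]
    have h7 : ((((univ : Finset (KClause n k)).filter
        (fun c => ClauseSat t c ∧ ClauseSat x c)).card : ℕ) : ℝ)
        + (n.choose k : ℝ) + (n.choose k : ℝ)
        = (n.choose k : ℝ) * 2 ^ k + (d.choose k : ℝ) := by exact_mod_cast hB
    linarith
  have hden : (0 : ℝ) < (n.choose k : ℝ) * (2 ^ k - 1) := by
    apply mul_pos hNpos; linarith
  have hN0 : (n.choose k : ℝ) ≠ 0 := ne_of_gt hNpos
  have h2k0 : (2 : ℝ) ^ k - 1 ≠ 0 := by linarith
  have hμ : μ = ((n.choose k : ℝ) * (2 ^ k - 2) + (d.choose k : ℝ))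
      / ((n.choose k : ℝ) * (2 ^ k - 1)) := by
    rw [show μ = ((St.filter (fun c => ClauseSat x c)).card : ℝ) / (St.card : ℝ) from rfl,
      hStR, hBR]
  refine ⟨?_, ?_, ?_⟩
  · rw [hμ]
    field_simp
  · rw [hμ, div_le_one hden]
    nlinarith
  · rw [hμ]
    field_simp
    ring
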